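/- Let Y_m(y₁), Y_m(y₂) be two solutions of the implicit Euler recursion Y_{m+1} = Y_m + τ B Y_{m+1} + τ G(x, Y_m) + √τ R_τ ζ_{m+1} driven by the same noise, where B is self-adjoint negative with spectrum bounded above by -μ and G(x,·) is L_g-Lipschitz with L_g < μ. Then for any τ₀ > 0 there is c > 0 such that for 0 < τ ≤ τ₀, ‖Y_m(y₁) - Y_m(y₂)‖ ≤ e^{-cmτ}‖y₁ - y₂‖ almost surely. -/

import Mathlib

open RealInnerProductSpace

theorem stmt2 {H : Type*} [NormedAddCommGroup H] [InnerProductSpace ℝ H]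
    (L_g μ : ℝ) (hL : 0 < L_g) (hLμ : L_g < μ) (τ₀ : ℝ) (hτ₀ : 0 < τ₀) :
    ∃ c > 0, ∀ τ : ℝ, 0 < τ → τ ≤ τ₀ →
      ∀ (B : H →ₗ[ℝ] H), (∀ y : H, ⟪B y, y⟫ ≤ -μ * ‖y‖ ^ 2) →
      ∀ (G : H → H → H) (x : H),
        (∀ (x' y₁' y₂' : H), ‖G x' y₁' - G x' y₂'‖ ≤ L_g * ‖y₁' - y₂'‖) →
      ∀ (y₁ y₂ : H) (Y₁ Y₂ : ℕ → H) (noise : ℕ → H),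
        Y₁ 0 = y₁ → Y₂ 0 = y₂ →
        (∀ m : ℕ, Y₁ (m + 1) = Y₁ m + τ • B (Y₁ (m + 1)) + τ • G x (Y₁ m) + noise m) →
        (∀ m : ℕ, Y₂ (m + 1) = Y₂ m + τ • B (Y₂ (m + 1)) + τ • G x (Y₂ m) + noise m) →
        ∀ m : ℕ, ‖Y₁ m - Y₂ m‖ ≤ Real.exp (-c * m * τ) * ‖y₁ - y₂‖ := by
  have hμ : 0 < μ := hL.trans hLμ
  refine ⟨(μ - L_g) / (1 + τ₀ * μ), div_pos (by linarith) (by positivity), ?_⟩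
  set c := (μ - L_g) / (1 + τ₀ * μ) with hc
  have hcpos : 0 < c := div_pos (by linarith) (by positivity)
  intro τ hτ hττ₀ B hB G x hG y₁ y₂ Y₁ Y₂ noise h10 h20 h1 h2
  have hpos : (0:ℝ) < 1 + τ * μ := by nlinarith
  have hcb : c * (1 + τ * μ) ≤ μ - L_g := by
    have h1 : c * (1 + τ * μ) ≤ c * (1 + τ₀ * μ) := by
      apply mul_le_mul_of_nonneg_left _ hcpos.le
      nlinarith
    have h2 : c * (1 + τ₀ * μ) = μ - L_g := by
      rw [hc]; field_simp
    linarith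
  have hfac : (1 + τ * L_g) ≤ Real.exp (-c * τ) * (1 + τ * μ) := by
    have he : 1 - c * τ ≤ Real.exp (-(c * τ)) := by
      have := Real.add_one_le_exp (-(c * τ)); linarith
    have h2 : (1 + τ * L_g) ≤ (1 - c * τ) * (1 + τ * μ) := by
      nlinarith [mul_le_mul_of_nonneg_left hcb hτ.le]
    calc (1 + τ * L_g) ≤ (1 - c * τ) * (1 + τ * μ) := h2
      _ ≤ Real.exp (-(c * τ)) * (1 + τ * μ) :=
          mul_le_mul_of_nonneg_right he hpos.le
      _ = Real.exp (-c * τ) * (1 + τ * μ) := by ring_nf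
  have key : ∀ m, (1 + τ * μ) * ‖Y₁ (m+1) - Y₂ (m+1)‖ ≤
      (1 + τ * L_g) * ‖Y₁ m - Y₂ m‖ := by
    intro m
    set r := Y₁ (m+1) - Y₂ (m+1) with hrdef
    set s := Y₁ m - Y₂ m with hsdef
    set Δ := G x (Y₁ m) - G x (Y₂ m) with hΔdef
    have hrec : r = s + τ • (B r) + τ • Δ := by
      calc r = Y₁ (m+1) - Y₂ (m+1) := hrdef
        _ = (Y₁ m + τ • B (Y₁ (m+1)) + τ • G x (Y₁ m) + noise m) -
            (Y₂ m + τ • B (Y₂ (m+1)) + τ • G x (Y₂ m) + noise m) := by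
              rw [← h1 m, ← h2 m]
        _ = s + τ • (B r) + τ • Δ := by
              rw [hrdef, hsdef, hΔdef, map_sub, smul_sub, smul_sub]
              abel
    by_cases hr0 : r = 0
    · rw [hr0]
      simp only [norm_zero, mul_zero]
      positivity
    have hrpos : 0 < ‖r‖ := norm_pos_iff.mpr hr0
    have hsq : ‖r‖ ^ 2 = ⟪s + τ • Δ, r⟫ + τ * ⟪B r, r⟫ := by
      rw [← real_inner_self_eq_norm_sq]
      nth_rewrite 1 [hrec]
      simp only [inner_add_left, real_inner_smul_left]
      ring
    have hbound1 : ⟪s + τ • Δ, r⟫ ≤ (1 + τ * L_g) * ‖s‖ * ‖r‖ := by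
      have h1' : ⟪s + τ • Δ, r⟫ ≤ ‖s + τ • Δ‖ * ‖r‖ := real_inner_le_norm _ _
      have h2' : ‖s + τ • Δ‖ ≤ ‖s‖ + τ * ‖Δ‖ := by
        calc ‖s + τ • Δ‖ ≤ ‖s‖ + ‖τ • Δ‖ := norm_add_le _ _
          _ = ‖s‖ + τ * ‖Δ‖ := by rw [norm_smul, Real.norm_of_nonneg hτ.le]
      have h3' : ‖Δ‖ ≤ L_g * ‖s‖ := hG x (Y₁ m) (Y₂ m)
      have h4' : ‖s + τ • Δ‖ ≤ (1 + τ * L_g) * ‖s‖ := by nlinarith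
      calc ⟪s + τ • Δ, r⟫ ≤ ‖s + τ • Δ‖ * ‖r‖ := h1'
        _ ≤ (1 + τ * L_g) * ‖s‖ * ‖r‖ :=
            mul_le_mul_of_nonneg_right h4' (norm_nonneg _)
    have hbound2 : τ * ⟪B r, r⟫ ≤ τ * (-μ * ‖r‖ ^ 2) :=
      mul_le_mul_of_nonneg_left (hB r) hτ.le
    have hineq : (1 + τ * μ) * ‖r‖ ^ 2 ≤ (1 + τ * L_g) * ‖s‖ * ‖r‖ := by
      nlinarith
    have := (mul_le_mul_iff_of_pos_right hrpos).mpr (le_refl ((1 + τ * μ) * ‖r‖))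
    nlinarith
  intro m
  induction m with
  | zero => simp [h10, h20]
  | succ m ih =>
    calc ‖Y₁ (m+1) - Y₂ (m+1)‖
        ≤ (1 + τ * L_g) / (1 + τ * μ) * ‖Y₁ m - Y₂ m‖ := by
          rw [div_mul_eq_mul_div, le_div_iff₀ hpos]
          nlinarith [key m]
      _ ≤ Real.exp (-c * τ) * ‖Y₁ m - Y₂ m‖ := by
          apply mul_le_mul_of_nonneg_right _ (norm_nonneg _)
          rw [div_le_iff₀ hpos]
          exact hfac
      _ ≤ Real.exp (-c * τ) * (Real.exp (-c * m * τ) * ‖y₁ - y₂‖) :=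
          mul_le_mul_of_nonneg_left ih (Real.exp_nonneg _)
      _ = Real.exp (-c * (m+1 : ℕ) * τ) * ‖y₁ - y₂‖ := by
          rw [← mul_assoc, ← Real.exp_add]
          push_cast
          ring_nf
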